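/- Let f(x) be a monic irreducible polynomial over ℚ of prime degree p with complex roots α_1, ..., α_p. If integers m_1, ..., m_p and m satisfy ∑_{i=1}^p m_i α_i = m, then m_1 = m_2 = ... = m_p (i.e., the relation is a rational multiple of the trivial relation ∑ α_i = trace). -/

import Mathlib

open Polynomial Complex Finset

lemma key_lemma (p : ℕ) (hp : p.Prime) [NeZero p] (β : ZMod p → ℂ) (hβ : ∃ t, β t ≠ β 0)
    (c : ZMod p → ℚ) (m0 : ℂ)
    (hrel : ∀ j : ZMod p, ∑ t, (c t : ℂ) * β (t + j) = m0) :
    ∀ s t, c s = c t := by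
  haveI : Fact p.Prime := ⟨hp⟩
  set ζ : ℂ := Complex.exp (2 * Real.pi * Complex.I / p) with hζdef
  have hζ : IsPrimitiveRoot ζ p := Complex.isPrimitiveRoot_exp p hp.ne_zero
  have hζp : ζ ^ p = 1 := hζ.pow_eq_one
  set pw : ZMod p → ℂ := fun t => ζ ^ t.val with hpwdef
  have hmod : ∀ a : ℕ, ζ ^ (a % p) = ζ ^ a := by
    intro a
    conv_rhs => rw [← Nat.mod_add_div a p]
    rw [pow_add, pow_mul, hζp, one_pow, mul_one]
  have hcast : ∀ a : ℕ, pw (a : ZMod p) = ζ ^ a := by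
    intro a
    simp only [hpwdef, ZMod.val_natCast, hmod]
  have pw_add : ∀ s t : ZMod p, pw (s + t) = pw s * pw t := by
    intro s t
    have h1 : ((s.val + t.val : ℕ) : ZMod p) = s + t := by
      push_cast [ZMod.natCast_val, ZMod.cast_id]; ring
    rw [← h1, hcast, pow_add]
  have pw_mul : ∀ (w t : ZMod p), pw (w * t) = pw w ^ t.val := by
    intro w t
    have h1 : ((w.val * t.val : ℕ) : ZMod p) = w * t := by
      push_cast [ZMod.natCast_val, ZMod.cast_id]; ring
    rw [← h1, hcast, pow_mul, hpwdef]
  have pw_zero : pw 0 = 1 := by simp [hpwdef]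
  have sum_pw : ∑ s : ZMod p, pw s = 0 := by
    have h1 : ∑ s : ZMod p, pw s = ∑ i ∈ Finset.range p, ζ ^ i := by
      refine Finset.sum_nbij' (fun s => s.val) (fun i => (i : ZMod p)) ?_ ?_ ?_ ?_ ?_
      · intro s _; exact Finset.mem_range.mpr (ZMod.val_lt s)
      · intro i _; exact Finset.mem_univ _
      · intro s _; exact ZMod.natCast_rightInverse s
      · intro i hi; exact ZMod.val_cast_of_lt (Finset.mem_range.mp hi)
      · intro s _; rfl
    rw [h1]
    exact hζ.geom_sum_eq_zero hp.one_lt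
  have sum_pw_ite : ∀ d : ZMod p, ∑ u : ZMod p, pw (u * d) = if d = 0 then (p : ℂ) else 0 := by
    intro d
    by_cases hd : d = 0
    · simp [hd, pw_zero, Finset.card_univ]
    · rw [if_neg hd]
      calc ∑ u : ZMod p, pw (u * d) = ∑ s : ZMod p, pw s :=
            Fintype.sum_equiv (Equiv.mulRight₀ d hd) _ _ (fun u => rfl)
        _ = 0 := sum_pw
  set B : ZMod p → ℂ := fun u => ∑ s, pw (u * s) * β s with hBdef
  -- exists u ≠ 0 with B u ≠ 0
  have hBu : ∃ u, u ≠ 0 ∧ B u ≠ 0 := by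
    by_contra hcon
    push_neg at hcon
    have hconst : ∀ k : ZMod p, (p : ℂ) * β k = B 0 := by
      intro k
      have h1 : ∑ u : ZMod p, pw (u * (-k)) * B u = ∑ u : ZMod p, ∑ s, pw (u * (s - k)) * β s := by
        refine Finset.sum_congr rfl fun u _ => ?_
        rw [hBdef]
        rw [Finset.mul_sum]
        refine Finset.sum_congr rfl fun s _ => ?_
        rw [← mul_assoc, ← pw_add]
        ring_nf
      have h2 : ∑ u : ZMod p, ∑ s, pw (u * (s - k)) * β s
          = ∑ s, (∑ u : ZMod p, pw (u * (s - k))) * β s := by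
        rw [Finset.sum_comm]
        exact Finset.sum_congr rfl fun s _ => by rw [Finset.sum_mul]
      have h3 : ∑ s, (∑ u : ZMod p, pw (u * (s - k))) * β s = (p : ℂ) * β k := by
        rw [Finset.sum_eq_single k]
        · rw [sum_pw_ite, if_pos (by ring)]
        · intro s _ hs
          rw [sum_pw_ite, if_neg (by exact sub_ne_zero.mpr hs), zero_mul]
        · intro h; exact absurd (Finset.mem_univ k) h
      have h4 : ∑ u : ZMod p, pw (u * (-k)) * B u = B 0 := by
        rw [Finset.sum_eq_single 0]
        · rw [zero_mul, pw_zero, one_mul]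
        · intro u _ hu; rw [hcon u hu, mul_zero]
        · intro h; exact absurd (Finset.mem_univ 0) h
      rw [← h3, ← h2, ← h1, h4]
    obtain ⟨t, ht⟩ := hβ
    have hp0 : (p : ℂ) ≠ 0 := Nat.cast_ne_zero.mpr hp.ne_zero
    exact ht (mul_left_cancel₀ hp0 ((hconst t).trans (hconst 0).symm))
  obtain ⟨u, hu0, hBune⟩ := hBu
  -- main identity: A * B u = 0
  have hstep : ∀ t : ZMod p, ∑ j : ZMod p, pw (u * j) * β (t + j) = pw ((-u) * t) * B u := by
    intro t
    rw [hBdef]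
    simp only
    rw [Finset.mul_sum]
    refine Fintype.sum_equiv (Equiv.addLeft t) _ _ fun j => ?_
    simp only [Equiv.coe_addLeft]
    rw [← mul_assoc, ← pw_add]
    have h : (-u) * t + u * (t + j) = u * j := by ring
    rw [h]
  have hA : ∑ t, (c t : ℂ) * pw ((-u) * t) = 0 := by
    have h1 : ∑ j : ZMod p, pw (u * j) * m0 = 0 := by
      rw [← Finset.sum_mul]
      have h : ∑ j : ZMod p, pw (u * j) = 0 := by
        calc ∑ j : ZMod p, pw (u * j) = ∑ j : ZMod p, pw (j * u) :=
              Finset.sum_congr rfl fun j _ => by rw [mul_comm]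
          _ = 0 := by rw [sum_pw_ite, if_neg hu0]
      rw [h, zero_mul]
    have h2 : ∑ j : ZMod p, pw (u * j) * m0
        = (∑ t, (c t : ℂ) * pw ((-u) * t)) * B u := by
      calc ∑ j : ZMod p, pw (u * j) * m0
          = ∑ j : ZMod p, pw (u * j) * ∑ t, (c t : ℂ) * β (t + j) :=
            Finset.sum_congr rfl fun j _ => by rw [hrel j]
        _ = ∑ j : ZMod p, ∑ t, (c t : ℂ) * (pw (u * j) * β (t + j)) := by
            refine Finset.sum_congr rfl fun j _ => ?_
            rw [Finset.mul_sum]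
            exact Finset.sum_congr rfl fun t _ => by ring
        _ = ∑ t, ∑ j : ZMod p, (c t : ℂ) * (pw (u * j) * β (t + j)) := Finset.sum_comm
        _ = ∑ t, (c t : ℂ) * (pw ((-u) * t) * B u) := by
            refine Finset.sum_congr rfl fun t _ => ?_
            rw [← Finset.mul_sum, hstep t]
        _ = (∑ t, (c t : ℂ) * pw ((-u) * t)) * B u := by
            rw [Finset.sum_mul]
            exact Finset.sum_congr rfl fun t _ => by ring
    have h3 := h2 ▸ h1
    rcases mul_eq_zero.mp h3 with h | h
    · exact h
    · exact absurd h hBune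
  -- cyclotomic step
  set η : ℂ := pw (-u) with hηdef
  have hvne : (-u).val ≠ 0 := by
    simp only [ne_eq, ZMod.val_eq_zero]
    exact neg_ne_zero.mpr hu0
  have hη : IsPrimitiveRoot η p := by
    have hnd : ¬ p ∣ (-u).val :=
      Nat.not_dvd_of_pos_of_lt (Nat.pos_of_ne_zero hvne) (ZMod.val_lt (-u))
    have hcop : ((-u).val).Coprime p :=
      Nat.Coprime.symm ((Nat.Prime.coprime_iff_not_dvd hp).mpr hnd)
    exact hζ.pow_of_coprime _ hcop
  set g : Polynomial ℚ := ∑ t : ZMod p, Polynomial.C (c t) * Polynomial.X ^ (t.val) with hgdef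
  have haev : Polynomial.aeval η g = 0 := by
    rw [hgdef, map_sum]
    rw [← hA]
    refine Finset.sum_congr rfl fun t _ => ?_
    rw [map_mul, map_pow, Polynomial.aeval_C, Polynomial.aeval_X]
    have hpow : η ^ t.val = pw ((-u) * t) := (pw_mul (-u) t).symm
    rw [hpow]
    norm_num [eq_ratCast]
  have hmin : Polynomial.cyclotomic p ℚ ∣ g := by
    rw [Polynomial.cyclotomic_eq_minpoly_rat hη hp.pos]
    exact minpoly.dvd ℚ η haev
  have hcoeff : ∀ t : ZMod p, g.coeff t.val = c t := by
    intro t0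
    rw [hgdef, Polynomial.finset_sum_coeff]
    rw [Finset.sum_eq_single t0]
    · rw [Polynomial.coeff_C_mul, Polynomial.coeff_X_pow, if_pos rfl, mul_one]
    · intro t _ ht
      rw [Polynomial.coeff_C_mul, Polynomial.coeff_X_pow,
        if_neg (fun h => ht (ZMod.val_injective p h.symm)), mul_zero]
    · intro h; exact absurd (Finset.mem_univ t0) h
  obtain ⟨q, hq⟩ := hmin
  have hΦdeg : (Polynomial.cyclotomic p ℚ).natDegree = p - 1 := by
    rw [Polynomial.natDegree_cyclotomic, Nat.totient_prime hp]
  by_cases hq0 : q = 0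
  · have hg0 : g = 0 := by rw [hq, hq0, mul_zero]
    intro s t
    have hs := hcoeff s
    have ht := hcoeff t
    rw [hg0, Polynomial.coeff_zero] at hs ht
    rw [← hs, ← ht]
  · have hgdeg : g.natDegree ≤ p - 1 := by
      rw [hgdef]
      refine Polynomial.natDegree_sum_le_of_forall_le _ _ fun t _ => ?_
      refine le_trans (Polynomial.natDegree_C_mul_le _ _) ?_
      rw [Polynomial.natDegree_X_pow]
      have := ZMod.val_lt t
      omega
    have hqdeg : q.natDegree = 0 := by
      have hΦne : Polynomial.cyclotomic p ℚ ≠ 0 := Polynomial.cyclotomic_ne_zero p ℚ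
      have := Polynomial.natDegree_mul hΦne hq0
      rw [← hq, hΦdeg] at this
      omega
    obtain ⟨r, hr⟩ := Polynomial.natDegree_eq_zero.mp hqdeg
    have hcyc : Polynomial.cyclotomic p ℚ = ∑ i ∈ Finset.range p, Polynomial.X ^ i :=
      Polynomial.cyclotomic_prime ℚ p
    have hval : ∀ t : ZMod p, g.coeff t.val = r := by
      intro t
      rw [hq, ← hr, Polynomial.coeff_mul_C, hcyc, Polynomial.finset_sum_coeff]
      rw [Finset.sum_eq_single t.val]
      · rw [Polynomial.coeff_X_pow, if_pos rfl, one_mul]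
      · intro i _ hi
        rw [Polynomial.coeff_X_pow, if_neg (fun h => hi h.symm)]
      · intro h; exact absurd (Finset.mem_range.mpr (ZMod.val_lt t)) h
    intro s t
    rw [← hcoeff s, ← hcoeff t, hval s, hval t]

theorem stmt_2 (p : ℕ) (hp : p.Prime) (f : Polynomial ℚ) (hmonic : f.Monic)
    (hirr : Irreducible f) (hdeg : f.natDegree = p)
    (α : Fin p → ℂ)
    (hroots : f.map (algebraMap ℚ ℂ) = ∏ i, (Polynomial.X - Polynomial.C (α i)))
    (m : Fin p → ℤ) (m0 : ℤ)
    (hrel : ∑ i, (m i : ℂ) * α i = (m0 : ℂ)) :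
    ∀ i j, m i = m j := by
  haveI : Fact p.Prime := ⟨hp⟩
  haveI : NeZero p := ⟨hp.ne_zero⟩
  have hsep : f.Separable := hirr.separable
  have hsplC : (f.map (algebraMap ℚ ℂ)).Splits := IsAlgClosed.splits _
  -- roots in ℂ
  have hrootsC : (f.map (algebraMap ℚ ℂ)).roots = Multiset.map α Finset.univ.val := by
    rw [hroots]
    have : (∏ i, (X - C (α i))) = ((Multiset.map α Finset.univ.val).map fun a => X - C a).prod := by
      rw [Multiset.map_map]
      rfl
    rw [this, roots_multiset_prod_X_sub_C]
  have hαinj : Function.Injective α := by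
    have hnd : ((f.map (algebraMap ℚ ℂ)).roots).Nodup := nodup_roots (hsep.map)
    rw [hrootsC] at hnd
    intro i j hij
    exact Multiset.inj_on_of_nodup_map hnd i (Finset.mem_univ i) j (Finset.mem_univ j) hij
  -- splitting field
  set M := f.SplittingField with hMdef
  set ι : M →ₐ[ℚ] ℂ := SplittingField.lift f hsplC with hιdef
  have hιinj : Function.Injective ι := RingHom.injective (ι : M →+* ℂ)
  set P : Polynomial M := f.map (algebraMap ℚ M) with hPdef
  have hPsplits : P.Splits :=
    SplittingField.splits f
  have hrootsmap : (f.map (algebraMap ℚ ℂ)).roots = P.roots.map ι := by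
    have key := hPsplits.roots_map (ι : M →+* ℂ)
    rw [Polynomial.map_map, AlgHom.comp_algebraMap] at key
    simpa using key
  have hex : ∀ i, ∃ x, x ∈ P.roots ∧ ι x = α i := by
    intro i
    have : α i ∈ P.roots.map ι := by
      rw [← hrootsmap, hrootsC]
      exact Multiset.mem_map_of_mem α (Finset.mem_univ i)
    obtain ⟨x, hx1, hx2⟩ := Multiset.mem_map.mp this
    exact ⟨x, hx1, hx2⟩
  choose a ha1 ha2 using hex
  have hainj : Function.Injective a := fun i j hij => hαinj (by rw [← ha2 i, ← ha2 j, hij])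
  have hPne : P ≠ 0 := by
    rw [hPdef]
    exact (Polynomial.map_ne_zero_iff (algebraMap ℚ M).injective).mpr hmonic.ne_zero
  have hallroots : ∀ r ∈ P.roots, ∃ i, r = a i := by
    intro r hr
    have : ι r ∈ P.roots.map ι := Multiset.mem_map_of_mem ι hr
    rw [← hrootsmap, hrootsC] at this
    obtain ⟨i, _, hi⟩ := Multiset.mem_map.mp this
    exact ⟨i, hιinj (by rw [ha2 i, hi])⟩
  -- the Galois element of order p
  have hdvd : p ∣ Fintype.card f.Gal := by
    have := Polynomial.Gal.prime_degree_dvd_card hirr (hdeg ▸ hp)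
    rwa [hdeg, Nat.card_eq_fintype_card] at this
  obtain ⟨σ, hσ⟩ := exists_prime_orderOf_dvd_card p hdvd
  -- σ permutes the a i
  have hσroot : ∀ i, σ (a i) ∈ P.roots := by
    intro i
    have h1 : P.eval (a i) = 0 := (Polynomial.mem_roots'.mp (ha1 i)).2
    rw [Polynomial.mem_roots']
    refine ⟨hPne, ?_⟩
    have h2 : Polynomial.aeval (a i) f = 0 := by
      rw [Polynomial.aeval_def, ← Polynomial.eval_map, ← hPdef]
      exact h1
    have h3 : Polynomial.aeval (σ (a i)) f = 0 := by
      have h4 : σ (a i) = (AlgEquiv.toAlgHom σ : M →ₐ[ℚ] M) (a i) := rfl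
      rw [h4, Polynomial.aeval_algHom_apply, h2, map_zero]
    rw [Polynomial.IsRoot, hPdef, Polynomial.eval_map, ← Polynomial.aeval_def]
    exact h3
  have hπex : ∀ i, ∃ j, σ (a i) = a j := fun i => hallroots _ (hσroot i)
  choose π0 hπ0 using hπex
  have hπ0inj : Function.Injective π0 := by
    intro i j hij
    apply hainj
    apply σ.injective
    exact (hπ0 i).trans ((congrArg a hij).trans (hπ0 j).symm)
  set π : Equiv.Perm (Fin p) := Equiv.ofBijective π0 (Finite.injective_iff_bijective.mp hπ0inj)
    with hπdef
  have hπapp : ∀ i, π i = π0 i := fun i => rfl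
  have hiter : ∀ (k : ℕ) (i), (σ ^ k) (a i) = a ((π ^ k) i) := by
    intro k
    induction k with
    | zero => intro i; rfl
    | succ k ih =>
      intro i
      have h1 : (σ ^ (k + 1)) (a i) = (σ ^ k) (σ (a i)) := by rw [pow_succ]; rfl
      have h2 : (π ^ (k + 1)) i = (π ^ k) (π i) := by rw [pow_succ]; rfl
      rw [h1, hπ0 i, ih, h2, hπapp]
  -- π is nontrivial
  have hπne : π ≠ 1 := by
    intro hone
    have hfix : ∀ r ∈ P.roots, σ r = r := by
      intro r hr
      obtain ⟨i, rfl⟩ := hallroots r hr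
      rw [hπ0 i]
      congr 1
      have h1 : π0 i = π i := (hπapp i).symm
      rw [h1, hone, Equiv.Perm.one_apply]
    have hσ1 : σ = 1 := by
      have hadj : Algebra.adjoin ℚ (f.rootSet M) = ⊤ :=
        Polynomial.SplittingField.adjoin_rootSet f
      have hext : (AlgEquiv.toAlgHom σ : M →ₐ[ℚ] M) = (AlgHom.id ℚ M) := by
        apply AlgHom.ext_of_adjoin_eq_top hadj
        intro x hx
        have hx' : x ∈ P.roots := by
          rw [Polynomial.mem_rootSet'] at hx
          rw [Polynomial.mem_roots']
          refine ⟨hPne, ?_⟩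
          rw [Polynomial.IsRoot, hPdef, Polynomial.eval_map, ← Polynomial.aeval_def]
          exact hx.2
        exact hfix x hx'
      exact AlgEquiv.ext fun x => AlgHom.ext_iff.mp hext x
    rw [hσ1, orderOf_one] at hσ
    exact hp.one_lt.ne' hσ.symm
  have hπp : π ^ p = 1 := by
    have h1 : σ ^ p = 1 := by rw [← hσ]; exact pow_orderOf_eq_one σ
    apply Equiv.ext
    intro i
    have h2 := hiter p i
    rw [h1] at h2
    have h3 : a i = a ((π ^ p) i) := h2
    rw [Equiv.Perm.one_apply]
    exact (hainj h3).symm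
  have hπord : orderOf π = p := by
    have hdvd' : orderOf π ∣ p := orderOf_dvd_of_pow_eq_one hπp
    rcases hp.eq_one_or_self_of_dvd _ hdvd' with h | h
    · exact absurd (orderOf_eq_one_iff.mp h) hπne
    · exact h
  have hcyc : π.IsCycle := by
    refine Equiv.Perm.isCycle_of_prime_order (by rw [hπord]; exact hp) ?_
    calc π.support.card ≤ Fintype.card (Fin p) := Finset.card_le_univ _
      _ = p := Fintype.card_fin p
      _ < 2 * orderOf π := by rw [hπord]; have h2 := hp.two_le; omega
  have hsupp : π.support = Finset.univ := by
    have h1 : π.support.card = p := by rw [← hcyc.orderOf, hπord]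
    apply Finset.eq_univ_of_card
    rw [h1, Fintype.card_fin]
  have hmove : ∀ i, π i ≠ i := fun i =>
    Equiv.Perm.mem_support.mp (hsupp ▸ Finset.mem_univ i)
  have htrans : ∀ i j : Fin p, ∃ k : ℕ, (π ^ k) i = j := fun i j =>
    hcyc.exists_pow_eq (hmove i) (hmove j)
  -- indexing by ZMod p
  set i0 : Fin p := ⟨0, hp.pos⟩ with hi0def
  set e : ZMod p → Fin p := fun t => (π ^ t.val) i0 with hedef
  have hπmod : ∀ k : ℕ, π ^ (k % p) = π ^ k := by
    intro k
    have h0 : π ^ (k % p) = π ^ (k % orderOf π) := by rw [hπord]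
    rw [h0]
    exact pow_mod_orderOf π k
  have he_add : ∀ (t : ZMod p) (k : ℕ), e (t + (k : ZMod p)) = (π ^ k) (e t) := by
    intro t k
    rw [hedef]
    simp only
    have hval : (t + (k : ZMod p)).val = (t.val + k) % p := by
      rw [ZMod.val_add, ZMod.val_natCast]
      conv_rhs => rw [Nat.add_mod]
      rw [Nat.mod_eq_of_lt (ZMod.val_lt t)]
    rw [hval, hπmod, add_comm, pow_add, Equiv.Perm.mul_apply]
  have hesurj : Function.Surjective e := by
    intro i
    obtain ⟨k, hk⟩ := htrans i0 i
    refine ⟨(k : ZMod p), ?_⟩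
    rw [hedef]
    simp only [ZMod.val_natCast]
    rw [hπmod]
    exact hk
  have hebij : Function.Bijective e :=
    (Fintype.bijective_iff_surjective_and_card e).mpr
      ⟨hesurj, by rw [ZMod.card, Fintype.card_fin]⟩
  -- relations
  have relM : ∑ i, (m i : M) * a i = (m0 : M) := by
    apply hιinj
    rw [map_sum, map_intCast]
    rw [← hrel]
    exact Finset.sum_congr rfl fun i _ => by rw [map_mul, map_intCast, ha2]
  have relk : ∀ k : ℕ, ∑ i, (m i : ℂ) * α ((π ^ k) i) = (m0 : ℂ) := by
    intro k
    have h1 : ∑ i, (m i : M) * a ((π ^ k) i) = (m0 : M) := by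
      have h2 : (σ ^ k) (∑ i, (m i : M) * a i) = (σ ^ k) ((m0 : ℤ) : M) := by rw [relM]
      rw [map_sum, map_intCast] at h2
      rw [← h2]
      exact Finset.sum_congr rfl fun i _ => by rw [map_mul, map_intCast, hiter k i]
    have h3 : ι (∑ i, (m i : M) * a ((π ^ k) i)) = ι ((m0 : ℤ) : M) := by rw [h1]
    rw [map_sum, map_intCast] at h3
    rw [← h3]
    exact Finset.sum_congr rfl fun i _ => by rw [map_mul, map_intCast, ha2]
  set β : ZMod p → ℂ := fun t => α (e t) with hβdef
  set c : ZMod p → ℚ := fun t => ((m (e t) : ℚ)) with hcdef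
  have hβ : ∃ t, β t ≠ β 0 := by
    refine ⟨1, fun h => ?_⟩
    exact one_ne_zero (hebij.1 (hαinj h))
  have hrelj : ∀ j : ZMod p, ∑ t, (c t : ℂ) * β (t + j) = ((m0 : ℤ) : ℂ) := by
    intro j
    have hj : j = ((j.val : ℕ) : ZMod p) := (ZMod.natCast_rightInverse j).symm
    calc ∑ t, (c t : ℂ) * β (t + j)
        = ∑ t, (m (e t) : ℂ) * α ((π ^ j.val) (e t)) := by
          refine Finset.sum_congr rfl fun t _ => ?_
          rw [hβdef, hcdef]
          simp only
          rw [show t + j = t + ((j.val : ℕ) : ZMod p) by rw [← hj], he_add]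
          push_cast
          ring
      _ = ∑ i, (m i : ℂ) * α ((π ^ j.val) i) :=
          Fintype.sum_bijective e hebij _ _ (fun t => rfl)
      _ = ((m0 : ℤ) : ℂ) := relk j.val
  have hc := key_lemma p hp β hβ c ((m0 : ℤ) : ℂ) hrelj
  intro i j
  obtain ⟨s, rfl⟩ := hesurj i
  obtain ⟨t, rfl⟩ := hesurj j
  have h2 : (m (e s) : ℚ) = (m (e t) : ℚ) := hc s t
  exact_mod_cast h2
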